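/- In the closeness-reduction graph G' = (V, E ∪ A*) with A* ⊆ {(t,S_i) : S_i ∈ S}, letting d_t = Σ_{u_i ∈ U} d(t,u_i) + Σ_{S_i ∈ S} d(t,S_i), the sum of distances from t to all other nodes equals 3l + m - k + 2 + d_t, and moreover d_t = 3l - |U_A| + 2m - |A*|, where U_A = {u_i ∈ U : ∃ S_j ∈ S with u_i ∈ S_j and (t,S_j) ∈ A*}. -/

import Mathlib

/-- Vertex type of the closeness-reduction graph built from a 3-Set Cover instance with
universe size `l`, family size `m` and parameter `k`:
`v_e = Sum.inl (Sum.inl ())`, `t = Sum.inl (Sum.inr ())`,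
set nodes `S_i = Sum.inr (Sum.inl (Sum.inl i))`,
universe nodes `u_j = Sum.inr (Sum.inl (Sum.inr j))`,
nodes `w_j = Sum.inr (Sum.inr (Sum.inl j))`, and
pendant nodes `x_i = Sum.inr (Sum.inr (Sum.inr i))`. -/
abbrev CVert (l m k : ℕ) :=
  (Unit ⊕ Unit) ⊕ (Fin m ⊕ Fin l) ⊕ (Fin l ⊕ Fin (l + m - k + 1))

/-- The closeness-reduction graph `G' = (V, E ∪ A*)` built from a 3-Set Cover instance
`(U, S, k)`, where `S i` is the `i`-th 3-element subset of the universe `Fin l` and the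
set `A ⊆ Fin m` records the added edges `(t, S_i)` for `i ∈ A`.  Base edges: `(t, v_e)`;
`(x_i, t)` for all `i`; `(w_j, v_e)` and `(w_j, u_j)` for all `j`; `(S_i, v_e)` for all
`i`; and `(S_i, u_j)` for `u_j ∈ S_i`. -/
def Cgraph (l m k : ℕ) (S : Fin m → Finset (Fin l)) (A : Finset (Fin m)) :
    SimpleGraph (CVert l m k) :=
  SimpleGraph.fromRel (fun a b =>
    match a, b with
    | Sum.inl (Sum.inl _), Sum.inl (Sum.inr _) => True
    | Sum.inr (Sum.inr (Sum.inr _)), Sum.inl (Sum.inr _) => True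
    | Sum.inr (Sum.inr (Sum.inl _)), Sum.inl (Sum.inl _) => True
    | Sum.inr (Sum.inr (Sum.inl j)), Sum.inr (Sum.inl (Sum.inr j')) => j = j'
    | Sum.inr (Sum.inl (Sum.inl _)), Sum.inl (Sum.inl _) => True
    | Sum.inr (Sum.inl (Sum.inl i)), Sum.inr (Sum.inl (Sum.inr j)) => j ∈ S i
    | Sum.inl (Sum.inr _), Sum.inr (Sum.inl (Sum.inl i)) => i ∈ A
    | _, _ => False)

/-- `D(G', v)`: the sum of shortest-path distances from `v` to all other nodes. -/
noncomputable def Dsum {l m k : ℕ} (G : SimpleGraph (CVert l m k)) (v : CVert l m k) : ℕ :=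
  ∑ w : CVert l m k, G.dist v w

lemma dist_eq_two' {V : Type*} {G : SimpleGraph V} {u v a : V}
    (hne : u ≠ v) (hna : ¬ G.Adj u v) (h1 : G.Adj u a) (h2 : G.Adj a v) :
    G.dist u v = 2 := by
  have hle : G.dist u v ≤ 2 := by
    have := G.dist_le (h1.toWalk.append h2.toWalk)
    simpa using this
  have h0 : G.dist u v ≠ 0 :=
    SimpleGraph.dist_ne_zero_iff_ne_and_reachable.mpr ⟨hne, ⟨h1.toWalk.append h2.toWalk⟩⟩
  have h1' : G.dist u v ≠ 1 := fun h => hna (SimpleGraph.dist_eq_one_iff_adj.mp h)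
  omega

lemma dist_eq_three' {V : Type*} {G : SimpleGraph V} {u v a b : V}
    (hne : u ≠ v) (hna : ¬ G.Adj u v) (hmid : ∀ w, G.Adj u w → ¬ G.Adj w v)
    (h1 : G.Adj u a) (h2 : G.Adj a b) (h3 : G.Adj b v) : G.dist u v = 3 := by
  have hr : G.Reachable u v := ⟨h1.toWalk.append (h2.toWalk.append h3.toWalk)⟩
  have hle : G.dist u v ≤ 3 := by
    have := G.dist_le (h1.toWalk.append (h2.toWalk.append h3.toWalk))
    simpa using this
  have h0 : G.dist u v ≠ 0 := SimpleGraph.dist_ne_zero_iff_ne_and_reachable.mpr ⟨hne, hr⟩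
  have h1' : G.dist u v ≠ 1 := fun h => hna (SimpleGraph.dist_eq_one_iff_adj.mp h)
  have h2' : G.dist u v ≠ 2 := by
    intro h
    obtain ⟨p, hp⟩ := hr.exists_walk_length_eq_dist
    rw [h] at hp
    cases p with
    | nil => simp at hp
    | cons ha q =>
      cases q with
      | nil => simp at hp
      | cons hb q' =>
        simp only [SimpleGraph.Walk.length_cons] at hp
        have hq0 : q'.length = 0 := by omega
        have := SimpleGraph.Walk.eq_of_length_eq_zero hq0
        subst this
        exact hmid _ ha hb
  omega

set_option maxHeartbeats 1000000 in
/-- With `d_t = Σ_{u_i ∈ U} d(t,u_i) + Σ_{S_i ∈ S} d(t,S_i)`, the sum of distances from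
`t` to all other nodes equals `3l + m - k + 2 + d_t`, and moreover
`d_t = 3l - |U_A| + 2m - |A*|`, where `U_A` is the set of universe elements covered by
some set `S_j` with `(t, S_j) ∈ A*`. -/
theorem Dsum_t (l m k : ℕ) (hkm : k ≤ m) (S : Fin m → Finset (Fin l))
    (h3 : ∀ i, (S i).card = 3) (A : Finset (Fin m)) :
    let G' := Cgraph l m k S A
    let dt := (∑ j : Fin l, G'.dist (Sum.inl (Sum.inr ())) (Sum.inr (Sum.inl (Sum.inr j))))
      + (∑ i : Fin m, G'.dist (Sum.inl (Sum.inr ())) (Sum.inr (Sum.inl (Sum.inl i))))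
    let UA := Finset.univ.filter (fun j : Fin l => ∃ i ∈ A, j ∈ S i)
    Dsum G' (Sum.inl (Sum.inr ())) = 3 * l + m - k + 2 + dt ∧
      dt = 3 * l - UA.card + 2 * m - A.card := by
  intro G' dt UA
  set t : CVert l m k := Sum.inl (Sum.inr ()) with ht
  set ve : CVert l m k := Sum.inl (Sum.inl ()) with hve
  -- adjacency facts
  have adj_t_ve : G'.Adj t ve := by simp [G', Cgraph, t, ve, SimpleGraph.fromRel_adj]
  have adj_t_x : ∀ i : Fin (l + m - k + 1), G'.Adj t (Sum.inr (Sum.inr (Sum.inr i))) := by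
    intro i; simp [G', Cgraph, t, SimpleGraph.fromRel_adj]
  have adj_t_s : ∀ i : Fin m, G'.Adj t (Sum.inr (Sum.inl (Sum.inl i))) ↔ i ∈ A := by
    intro i; simp [G', Cgraph, t, SimpleGraph.fromRel_adj]
  have nadj_t_u : ∀ j : Fin l, ¬ G'.Adj t (Sum.inr (Sum.inl (Sum.inr j))) := by
    intro j; simp [G', Cgraph, t, SimpleGraph.fromRel_adj]
  have nadj_t_w : ∀ j : Fin l, ¬ G'.Adj t (Sum.inr (Sum.inr (Sum.inl j))) := by
    intro j; simp [G', Cgraph, t, SimpleGraph.fromRel_adj]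
  have adj_ve_s : ∀ i : Fin m, G'.Adj ve (Sum.inr (Sum.inl (Sum.inl i))) := by
    intro i; simp [G', Cgraph, ve, SimpleGraph.fromRel_adj]
  have adj_ve_w : ∀ j : Fin l, G'.Adj ve (Sum.inr (Sum.inr (Sum.inl j))) := by
    intro j; simp [G', Cgraph, ve, SimpleGraph.fromRel_adj]
  have adj_w_u : ∀ j : Fin l, G'.Adj (Sum.inr (Sum.inr (Sum.inl j))) (Sum.inr (Sum.inl (Sum.inr j))) := by
    intro j; simp [G', Cgraph, SimpleGraph.fromRel_adj]
  have adj_s_u : ∀ i : Fin m, ∀ j ∈ S i,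
      G'.Adj (Sum.inr (Sum.inl (Sum.inl i))) (Sum.inr (Sum.inl (Sum.inr j))) := by
    intro i j hj; simp [G', Cgraph, SimpleGraph.fromRel_adj, hj]
  -- distances
  have d_ve : G'.dist t ve = 1 := SimpleGraph.dist_eq_one_iff_adj.mpr adj_t_ve
  have d_x : ∀ i, G'.dist t (Sum.inr (Sum.inr (Sum.inr i))) = 1 :=
    fun i => SimpleGraph.dist_eq_one_iff_adj.mpr (adj_t_x i)
  have d_w : ∀ j : Fin l, G'.dist t (Sum.inr (Sum.inr (Sum.inl j))) = 2 := by
    intro j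
    exact dist_eq_two' (by simp [t]) (nadj_t_w j) adj_t_ve (adj_ve_w j)
  have d_s : ∀ i : Fin m, G'.dist t (Sum.inr (Sum.inl (Sum.inl i))) = if i ∈ A then 1 else 2 := by
    intro i
    by_cases hi : i ∈ A
    · simp only [hi, if_true]
      exact SimpleGraph.dist_eq_one_iff_adj.mpr ((adj_t_s i).mpr hi)
    · simp only [hi, if_false]
      exact dist_eq_two' (by simp [t]) (fun h => hi ((adj_t_s i).mp h)) adj_t_ve (adj_ve_s i)
  have d_u : ∀ j : Fin l, G'.dist t (Sum.inr (Sum.inl (Sum.inr j)))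
      = if (∃ i ∈ A, j ∈ S i) then 2 else 3 := by
    intro j
    by_cases hj : ∃ i ∈ A, j ∈ S i
    · obtain ⟨i, hiA, hjS⟩ := hj
      rw [if_pos ⟨i, hiA, hjS⟩]
      exact dist_eq_two' (by simp [t]) (nadj_t_u j) ((adj_t_s i).mpr hiA) (adj_s_u i j hjS)
    · rw [if_neg hj]
      refine dist_eq_three' (by simp [t]) (nadj_t_u j) ?_ adj_t_ve (adj_ve_w j) (adj_w_u j)
      rintro ((⟨⟩|⟨⟩) | (i|j') | (j'|i)) h1 h2
      · exact absurd h2 (by simp [Cgraph, SimpleGraph.fromRel_adj, G'])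
      · exact G'.irrefl h1
      · have hiA : i ∈ A := (adj_t_s i).mp h1
        have hjS : j ∈ S i := by
          simpa [Cgraph, SimpleGraph.fromRel_adj, G'] using h2
        exact hj ⟨i, hiA, hjS⟩
      · exact absurd h1 (nadj_t_u j')
      · exact absurd h1 (nadj_t_w j')
      · exact absurd h2 (by simp [Cgraph, SimpleGraph.fromRel_adj, G'])
  -- sums
  have sum_u : (∑ j : Fin l, G'.dist t (Sum.inr (Sum.inl (Sum.inr j)))) = 3 * l - UA.card := by
    have hsplit := Finset.card_filter_add_card_filter_not
      (s := (Finset.univ : Finset (Fin l))) (p := fun j => ∃ i ∈ A, j ∈ S i)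
    simp only [Finset.card_univ, Fintype.card_fin] at hsplit
    rw [Finset.sum_congr rfl (fun j _ => d_u j), Finset.sum_ite, Finset.sum_const,
      Finset.sum_const, smul_eq_mul, smul_eq_mul]
    have hUA : UA.card = (Finset.univ.filter (fun j : Fin l => ∃ i ∈ A, j ∈ S i)).card := rfl
    omega
  have sum_s : (∑ i : Fin m, G'.dist t (Sum.inr (Sum.inl (Sum.inl i)))) = 2 * m - A.card := by
    have hc : A.card ≤ m := by simpa using A.card_le_univ.trans_eq (by simp)
    have hsplit := Finset.card_filter_add_card_filter_not
      (s := (Finset.univ : Finset (Fin m))) (p := fun i => i ∈ A)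
    simp only [Finset.card_univ, Fintype.card_fin] at hsplit
    have h1 : (Finset.univ.filter (fun i : Fin m => i ∈ A)).card = A.card := by
      congr 1; ext i; simp
    rw [Finset.sum_congr rfl (fun i _ => d_s i), Finset.sum_ite, Finset.sum_const,
      Finset.sum_const, smul_eq_mul, smul_eq_mul]
    omega
  constructor
  · have : Dsum G' t = G'.dist t ve + G'.dist t t
        + ((∑ i : Fin m, G'.dist t (Sum.inr (Sum.inl (Sum.inl i))))
          + (∑ j : Fin l, G'.dist t (Sum.inr (Sum.inl (Sum.inr j)))))
        + ((∑ j : Fin l, G'.dist t (Sum.inr (Sum.inr (Sum.inl j))))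
          + (∑ i : Fin (l + m - k + 1), G'.dist t (Sum.inr (Sum.inr (Sum.inr i))))) := by
      simp [Dsum, Fintype.sum_sum_type, add_assoc, t, ve]
    rw [this, d_ve, SimpleGraph.dist_self]
    rw [Finset.sum_congr rfl (fun j _ => d_w j), Finset.sum_congr rfl (fun i _ => d_x i)]
    simp only [Finset.sum_const, Finset.card_univ, Fintype.card_fin, smul_eq_mul, mul_one]
    have hdt : dt = (∑ j : Fin l, G'.dist t (Sum.inr (Sum.inl (Sum.inr j))))
      + (∑ i : Fin m, G'.dist t (Sum.inr (Sum.inl (Sum.inl i)))) := rfl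
    omega
  · have hcU : UA.card ≤ l := by simpa using UA.card_le_univ.trans_eq (by simp)
    have hcA : A.card ≤ m := by simpa using A.card_le_univ.trans_eq (by simp)
    have hdt : dt = (∑ j : Fin l, G'.dist t (Sum.inr (Sum.inl (Sum.inr j))))
      + (∑ i : Fin m, G'.dist t (Sum.inr (Sum.inl (Sum.inl i)))) := rfl
    rw [hdt, sum_u, sum_s]
    omega
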